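/- For each fixed y ∈ ℝ² and all t > 0, x ∈ ℝ², the Mehler kernel satisfies the magnetic heat equation ∂_t K(t,x,y) = Δ_x K(t,x,y) − iB₀(x₁ ∂_{x₂}K(t,x,y) − x₂ ∂_{x₁}K(t,x,y)) − (B₀²/4)|x|² K(t,x,y); equivalently, ∂_t K = −H_{B₀} K where H_{B₀} acts in the x-variable. -/

import Mathlib

open MeasureTheory Real Set

/-- The Mehler kernel `K(t,x,y)` of the Landau Hamiltonian with constant magnetic field `B₀`:
`K(t,x,y) = (B₀/(4π sinh(B₀t))) exp(−B₀|x−y|²/(4 tanh(B₀t)) − i(B₀/2)(x₁y₂ − x₂y₁))`. -/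
noncomputable def mehlerK (B₀ t : ℝ) (x y : ℝ × ℝ) : ℂ :=
  ((B₀ / (4 * Real.pi * Real.sinh (B₀ * t)) : ℝ) : ℂ) *
    Complex.exp
      (-(((B₀ * ((x.1 - y.1) ^ 2 + (x.2 - y.2) ^ 2) / (4 * Real.tanh (B₀ * t))) : ℝ) : ℂ)
        - Complex.I * ((B₀ / 2 : ℝ) : ℂ) * (((x.1 * y.2 - x.2 * y.1) : ℝ) : ℂ))

lemma mehlerK_eq (B₀ t : ℝ) (y : ℝ × ℝ) (a b : ℝ) :
    mehlerK B₀ t (a, b) y =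
      ((B₀ / (4 * Real.pi * Real.sinh (B₀ * t)) : ℝ) : ℂ) *
        Complex.exp (-(B₀ : ℂ) * (((a : ℂ) - y.1) ^ 2 + ((b : ℂ) - y.2) ^ 2) /
            (4 * (Real.tanh (B₀ * t) : ℂ))
          - Complex.I * ((B₀ : ℂ) / 2) * ((a : ℂ) * y.2 - (b : ℂ) * y.1)) := by
  unfold mehlerK
  congr 1
  push_cast
  ring

/-- first-coordinate logarithmic derivative -/
noncomputable def mA1 (B₀ t : ℝ) (y : ℝ × ℝ) (a : ℝ) : ℂ :=
  -(B₀ : ℂ) * (2 * ((a : ℂ) - y.1)) / (4 * (Real.tanh (B₀ * t) : ℂ))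
    - Complex.I * ((B₀ : ℂ) / 2) * (y.2 : ℂ)

noncomputable def mA2 (B₀ t : ℝ) (y : ℝ × ℝ) (b : ℝ) : ℂ :=
  -(B₀ : ℂ) * (2 * ((b : ℂ) - y.2)) / (4 * (Real.tanh (B₀ * t) : ℂ))
    + Complex.I * ((B₀ : ℂ) / 2) * (y.1 : ℂ)

lemma hasDerivAt_x1 (B₀ t : ℝ) (y : ℝ × ℝ) (b a : ℝ) :
    HasDerivAt (fun a' : ℝ => mehlerK B₀ t (a', b) y)
      (mehlerK B₀ t (a, b) y * mA1 B₀ t y a) a := by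
  have hg : HasDerivAt (fun z : ℂ =>
      -(B₀ : ℂ) * ((z - y.1) ^ 2 + ((b : ℂ) - y.2) ^ 2) / (4 * (Real.tanh (B₀ * t) : ℂ))
        - Complex.I * ((B₀ : ℂ) / 2) * (z * y.2 - (b : ℂ) * y.1))
      (mA1 B₀ t y a) (a : ℂ) := by
    have e1 : HasDerivAt (fun z : ℂ => (z - (y.1 : ℂ)) ^ 2 + ((b : ℂ) - y.2) ^ 2)
        (2 * ((a : ℂ) - y.1)) (a : ℂ) := by
      simpa using (((hasDerivAt_id ((a : ℂ))).sub_const ((y.1 : ℂ))).pow 2).add_const (((b : ℂ) - y.2) ^ 2)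
    have e2 : HasDerivAt (fun z : ℂ => z * (y.2 : ℂ) - (b : ℂ) * y.1) ((y.2 : ℂ)) (a : ℂ) := by
      simpa using ((hasDerivAt_id ((a : ℂ))).mul_const ((y.2 : ℂ))).sub_const ((b : ℂ) * y.1)
    exact ((e1.const_mul _).div_const _).sub (e2.const_mul _)
  have h := ((hg.cexp).const_mul
      ((B₀ / (4 * Real.pi * Real.sinh (B₀ * t)) : ℝ) : ℂ)).comp_ofReal
  have hf : (fun a' : ℝ => mehlerK B₀ t (a', b) y) =
      (fun a' : ℝ => ((B₀ / (4 * Real.pi * Real.sinh (B₀ * t)) : ℝ) : ℂ) *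
        Complex.exp (-(B₀ : ℂ) * (((a' : ℂ) - y.1) ^ 2 + ((b : ℂ) - y.2) ^ 2) /
            (4 * (Real.tanh (B₀ * t) : ℂ))
          - Complex.I * ((B₀ : ℂ) / 2) * ((a' : ℂ) * y.2 - (b : ℂ) * y.1))) :=
    funext fun a' => mehlerK_eq B₀ t y a' b
  rw [hf, mehlerK_eq]
  simpa [mul_assoc] using h

lemma hasDerivAt_x2 (B₀ t : ℝ) (y : ℝ × ℝ) (a b : ℝ) :
    HasDerivAt (fun b' : ℝ => mehlerK B₀ t (a, b') y)
      (mehlerK B₀ t (a, b) y * mA2 B₀ t y b) b := by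
  have hg : HasDerivAt (fun z : ℂ =>
      -(B₀ : ℂ) * (((a : ℂ) - y.1) ^ 2 + (z - (y.2 : ℂ)) ^ 2) / (4 * (Real.tanh (B₀ * t) : ℂ))
        - Complex.I * ((B₀ : ℂ) / 2) * ((a : ℂ) * y.2 - z * y.1))
      (mA2 B₀ t y b) (b : ℂ) := by
    have e1 : HasDerivAt (fun z : ℂ => ((a : ℂ) - y.1) ^ 2 + (z - (y.2 : ℂ)) ^ 2)
        (2 * ((b : ℂ) - y.2)) (b : ℂ) := by
      simpa using (((hasDerivAt_id ((b : ℂ))).sub_const ((y.2 : ℂ))).pow 2).const_add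
        (((a : ℂ) - y.1) ^ 2)
    have e2 : HasDerivAt (fun z : ℂ => (a : ℂ) * y.2 - z * (y.1 : ℂ)) (-(y.1 : ℂ)) (b : ℂ) := by
      simpa using ((hasDerivAt_id ((b : ℂ))).mul_const ((y.1 : ℂ))).const_sub ((a : ℂ) * y.2)
    have := ((e1.const_mul (-(B₀ : ℂ))).div_const (4 * (Real.tanh (B₀ * t) : ℂ))).sub
      (e2.const_mul (Complex.I * ((B₀ : ℂ) / 2)))
    refine this.congr_deriv ?_
    unfold mA2; ring
  have h := ((hg.cexp).const_mul
      ((B₀ / (4 * Real.pi * Real.sinh (B₀ * t)) : ℝ) : ℂ)).comp_ofReal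
  have hf : (fun b' : ℝ => mehlerK B₀ t (a, b') y) =
      (fun b' : ℝ => ((B₀ / (4 * Real.pi * Real.sinh (B₀ * t)) : ℝ) : ℂ) *
        Complex.exp (-(B₀ : ℂ) * (((a : ℂ) - y.1) ^ 2 + ((b' : ℂ) - y.2) ^ 2) /
            (4 * (Real.tanh (B₀ * t) : ℂ))
          - Complex.I * ((B₀ : ℂ) / 2) * ((a : ℂ) * y.2 - (b' : ℂ) * y.1))) :=
    funext fun b' => mehlerK_eq B₀ t y a b'
  rw [hf, mehlerK_eq]
  simpa [mul_assoc] using h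

lemma hasDerivAt_mA1 (B₀ t : ℝ) (y : ℝ × ℝ) (a : ℝ) :
    HasDerivAt (fun a : ℝ => mA1 B₀ t y a)
      (-(B₀ : ℂ) * 2 / (4 * (Real.tanh (B₀ * t) : ℂ))) a := by
  have h : HasDerivAt (fun z : ℂ =>
      -(B₀ : ℂ) * (2 * (z - y.1)) / (4 * (Real.tanh (B₀ * t) : ℂ))
        - Complex.I * ((B₀ : ℂ) / 2) * (y.2 : ℂ))
      (-(B₀ : ℂ) * 2 / (4 * (Real.tanh (B₀ * t) : ℂ))) (a : ℂ) := by
    simpa using (((((hasDerivAt_id ((a : ℂ))).sub_const ((y.1 : ℂ))).const_mul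
      (2 : ℂ)).const_mul (-(B₀ : ℂ))).div_const (4 * (Real.tanh (B₀ * t) : ℂ))).sub_const
      (Complex.I * ((B₀ : ℂ) / 2) * (y.2 : ℂ))
  exact h.comp_ofReal

lemma hasDerivAt_mA2 (B₀ t : ℝ) (y : ℝ × ℝ) (b : ℝ) :
    HasDerivAt (fun b : ℝ => mA2 B₀ t y b)
      (-(B₀ : ℂ) * 2 / (4 * (Real.tanh (B₀ * t) : ℂ))) b := by
  have h : HasDerivAt (fun z : ℂ =>
      -(B₀ : ℂ) * (2 * (z - y.2)) / (4 * (Real.tanh (B₀ * t) : ℂ))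
        + Complex.I * ((B₀ : ℂ) / 2) * (y.1 : ℂ))
      (-(B₀ : ℂ) * 2 / (4 * (Real.tanh (B₀ * t) : ℂ))) (b : ℂ) := by
    simpa using (((((hasDerivAt_id ((b : ℂ))).sub_const ((y.2 : ℂ))).const_mul
      (2 : ℂ)).const_mul (-(B₀ : ℂ))).div_const (4 * (Real.tanh (B₀ * t) : ℂ))).add_const
      (Complex.I * ((B₀ : ℂ) / 2) * (y.1 : ℂ))
  exact h.comp_ofReal

lemma hasDerivAt_time (B₀ t : ℝ) (hs : Real.sinh (B₀ * t) ≠ 0) (x y : ℝ × ℝ) :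
    HasDerivAt (fun τ : ℝ => mehlerK B₀ τ x y)
      (mehlerK B₀ t x y *
        (((-(B₀ * Real.cosh (B₀ * t) / Real.sinh (B₀ * t))
          + B₀ ^ 2 * ((x.1 - y.1) ^ 2 + (x.2 - y.2) ^ 2) / (4 * Real.sinh (B₀ * t) ^ 2)) : ℝ) : ℂ)) t := by
  have hs' : HasDerivAt (fun τ : ℝ => Real.sinh (B₀ * τ)) (Real.cosh (B₀ * t) * B₀) t := by
    simpa [Function.comp_def] using (Real.hasDerivAt_sinh (B₀ * t)).comp t ((hasDerivAt_id t).const_mul B₀)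
  have hc' : HasDerivAt (fun τ : ℝ => Real.cosh (B₀ * τ)) (Real.sinh (B₀ * t) * B₀) t := by
    simpa [Function.comp_def] using (Real.hasDerivAt_cosh (B₀ * t)).comp t ((hasDerivAt_id t).const_mul B₀)
  have hden : 4 * Real.pi * Real.sinh (B₀ * t) ≠ 0 :=
    mul_ne_zero (by positivity) hs
  have hcf : HasDerivAt (fun τ : ℝ => B₀ / (4 * Real.pi * Real.sinh (B₀ * τ)))
      ((0 * (4 * Real.pi * Real.sinh (B₀ * t)) - B₀ * (4 * Real.pi * (Real.cosh (B₀ * t) * B₀))) /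
        (4 * Real.pi * Real.sinh (B₀ * t)) ^ 2) t :=
    (hasDerivAt_const t B₀).div (hs'.const_mul (4 * Real.pi)) hden
  have hq : HasDerivAt (fun τ : ℝ => Real.cosh (B₀ * τ) / Real.sinh (B₀ * τ))
      ((Real.sinh (B₀ * t) * B₀ * Real.sinh (B₀ * t) -
        Real.cosh (B₀ * t) * (Real.cosh (B₀ * t) * B₀)) / Real.sinh (B₀ * t) ^ 2) t :=
    hc'.div hs' hs
  have hh := hq.const_mul (B₀ * ((x.1 - y.1) ^ 2 + (x.2 - y.2) ^ 2) / 4)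
  have hrw : ∀ τ : ℝ, B₀ * ((x.1 - y.1) ^ 2 + (x.2 - y.2) ^ 2) / (4 * Real.tanh (B₀ * τ)) =
      B₀ * ((x.1 - y.1) ^ 2 + (x.2 - y.2) ^ 2) / 4 *
        (Real.cosh (B₀ * τ) / Real.sinh (B₀ * τ)) := by
    intro τ
    rw [Real.tanh_eq_sinh_div_cosh]
    rcases eq_or_ne (Real.sinh (B₀ * τ)) 0 with h | h
    · simp [h]
    · field_simp
  have hE := (((hh.ofReal_comp).neg.sub_const
    (Complex.I * ((B₀ / 2 : ℝ) : ℂ) * (((x.1 * y.2 - x.2 * y.1) : ℝ) : ℂ))).cexp)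
  have hprod := (hcf.ofReal_comp).mul hE
  have hfe : (fun τ : ℝ => mehlerK B₀ τ x y) = fun τ : ℝ =>
      ((B₀ / (4 * Real.pi * Real.sinh (B₀ * τ)) : ℝ) : ℂ) *
        Complex.exp (-(((B₀ * ((x.1 - y.1) ^ 2 + (x.2 - y.2) ^ 2) / 4 *
            (Real.cosh (B₀ * τ) / Real.sinh (B₀ * τ))) : ℝ) : ℂ)
          - Complex.I * ((B₀ / 2 : ℝ) : ℂ) * (((x.1 * y.2 - x.2 * y.1) : ℝ) : ℂ)) := by
    funext τ
    simp only [mehlerK]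
    rw [hrw τ]
  rw [hfe]
  have hKt := congrFun hfe t
  refine hprod.congr_deriv (Eq.symm ?_)
  simp only [Pi.neg_apply]
  rw [hKt]
  have keyR : (0 * (4 * Real.pi * Real.sinh (B₀ * t)) -
        B₀ * (4 * Real.pi * (Real.cosh (B₀ * t) * B₀))) /
        (4 * Real.pi * Real.sinh (B₀ * t)) ^ 2 +
      (B₀ / (4 * Real.pi * Real.sinh (B₀ * t))) *
        (-(B₀ * ((x.1 - y.1) ^ 2 + (x.2 - y.2) ^ 2) / 4 *
          ((Real.sinh (B₀ * t) * B₀ * Real.sinh (B₀ * t) -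
            Real.cosh (B₀ * t) * (Real.cosh (B₀ * t) * B₀)) / Real.sinh (B₀ * t) ^ 2))) =
      (B₀ / (4 * Real.pi * Real.sinh (B₀ * t))) *
        (-(B₀ * Real.cosh (B₀ * t) / Real.sinh (B₀ * t))
          + B₀ ^ 2 * ((x.1 - y.1) ^ 2 + (x.2 - y.2) ^ 2) / (4 * Real.sinh (B₀ * t) ^ 2)) := by
    have hc2 := Real.cosh_sq (B₀ * t)
    rw [show Real.cosh (B₀ * t) * (Real.cosh (B₀ * t) * B₀) = (Real.sinh (B₀ * t) ^ 2 + 1) * B₀ by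
      rw [← hc2]; ring]
    field_simp
    ring
  have keyC := congrArg (fun r : ℝ => (r : ℂ)) keyR
  push_cast at keyC
  set E := Complex.exp (-(((B₀ * ((x.1 - y.1) ^ 2 + (x.2 - y.2) ^ 2) / 4 *
      (Real.cosh (B₀ * t) / Real.sinh (B₀ * t))) : ℝ) : ℂ)
    - Complex.I * ((B₀ / 2 : ℝ) : ℂ) * (((x.1 * y.2 - x.2 * y.1) : ℝ) : ℂ)) with hEdef
  push_cast
  linear_combination (-E) * keyC


/-- **The Mehler kernel solves the magnetic heat equation.** For fixed `y ∈ ℝ²` and all `t > 0`,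
`x ∈ ℝ²`, one has
`∂_t K = Δ_x K − iB₀(x₁ ∂₂K − x₂ ∂₁K) − (B₀²/4)|x|² K`, i.e. `∂_t K = −H_{B₀} K` in `x`. -/
theorem mehlerK_heat_equation (B₀ : ℝ) (hB : 0 < B₀) (y : ℝ × ℝ) (t : ℝ) (ht : 0 < t)
    (x : ℝ × ℝ) :
    deriv (fun τ : ℝ => mehlerK B₀ τ x y) t =
      (deriv (fun a : ℝ => deriv (fun a' : ℝ => mehlerK B₀ t (a', x.2) y) a) x.1 +
        deriv (fun b : ℝ => deriv (fun b' : ℝ => mehlerK B₀ t (x.1, b') y) b) x.2)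
      - Complex.I * (B₀ : ℂ) *
          ((x.1 : ℂ) * deriv (fun b : ℝ => mehlerK B₀ t (x.1, b) y) x.2 -
            (x.2 : ℂ) * deriv (fun a : ℝ => mehlerK B₀ t (a, x.2) y) x.1)
      - ((B₀ ^ 2 / 4 : ℝ) : ℂ) * (((x.1 ^ 2 + x.2 ^ 2 : ℝ)) : ℂ) * mehlerK B₀ t x y := by
  obtain ⟨x1, x2⟩ := x
  have hBt : 0 < B₀ * t := mul_pos hB ht
  have hsinh : Real.sinh (B₀ * t) ≠ 0 := ne_of_gt (by rwa [Real.sinh_pos_iff])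
  have hcosh : Real.cosh (B₀ * t) ≠ 0 := (Real.cosh_pos (B₀ * t)).ne'
  have h2a : deriv (fun a : ℝ => deriv (fun a' : ℝ => mehlerK B₀ t (a', x2) y) a) x1 =
      mehlerK B₀ t (x1, x2) y * mA1 B₀ t y x1 * mA1 B₀ t y x1 +
        mehlerK B₀ t (x1, x2) y * (-(B₀ : ℂ) * 2 / (4 * (Real.tanh (B₀ * t) : ℂ))) := by
    have hfe : (fun a : ℝ => deriv (fun a' : ℝ => mehlerK B₀ t (a', x2) y) a) =
        fun a : ℝ => mehlerK B₀ t (a, x2) y * mA1 B₀ t y a :=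
      funext fun a => (hasDerivAt_x1 B₀ t y x2 a).deriv
    rw [hfe]
    exact ((hasDerivAt_x1 B₀ t y x2 x1).mul (hasDerivAt_mA1 B₀ t y x1)).deriv
  have h2b : deriv (fun b : ℝ => deriv (fun b' : ℝ => mehlerK B₀ t (x1, b') y) b) x2 =
      mehlerK B₀ t (x1, x2) y * mA2 B₀ t y x2 * mA2 B₀ t y x2 +
        mehlerK B₀ t (x1, x2) y * (-(B₀ : ℂ) * 2 / (4 * (Real.tanh (B₀ * t) : ℂ))) := by
    have hfe : (fun b : ℝ => deriv (fun b' : ℝ => mehlerK B₀ t (x1, b') y) b) =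
        fun b : ℝ => mehlerK B₀ t (x1, b) y * mA2 B₀ t y b :=
      funext fun b => (hasDerivAt_x2 B₀ t y x1 b).deriv
    rw [hfe]
    exact ((hasDerivAt_x2 B₀ t y x1 x2).mul (hasDerivAt_mA2 B₀ t y x2)).deriv
  have hsC : ((Real.sinh (B₀ * t) : ℝ) : ℂ) ≠ 0 := Complex.ofReal_ne_zero.mpr hsinh
  rw [(hasDerivAt_time B₀ t hsinh (x1, x2) y).deriv, h2a, h2b,
    (hasDerivAt_x1 B₀ t y x2 x1).deriv, (hasDerivAt_x2 B₀ t y x1 x2).deriv]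
  simp only [mA1, mA2]
  push_cast at hsC ⊢
  have hTinv : (Complex.tanh ((B₀ : ℂ) * (t : ℂ)))⁻¹ =
      Complex.cosh ((B₀ : ℂ) * (t : ℂ)) * (Complex.sinh ((B₀ : ℂ) * (t : ℂ)))⁻¹ := by
    rw [Complex.tanh_eq_sinh_div_cosh, inv_div, div_eq_mul_inv]
  have hsi : Complex.sinh ((B₀ : ℂ) * (t : ℂ)) * (Complex.sinh ((B₀ : ℂ) * (t : ℂ)))⁻¹ = 1 :=
    mul_inv_cancel₀ hsC
  have hrel : Complex.cosh ((B₀ : ℂ) * (t : ℂ)) ^ 2 =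
      Complex.sinh ((B₀ : ℂ) * (t : ℂ)) ^ 2 + 1 := by
    have h2 := congrArg (fun r : ℝ => (r : ℂ)) (Real.cosh_sq (B₀ * t))
    push_cast at h2
    exact h2
  simp only [div_eq_mul_inv, mul_inv, ← inv_pow, hTinv]
  set K := mehlerK B₀ t (x1, x2) y with hK
  linear_combination
    (K * ((B₀ : ℂ) ^ 2 / 4) * (-((((x1 : ℂ) - (y.1 : ℂ)) ^ 2 + ((x2 : ℂ) - (y.2 : ℂ)) ^ 2) *
      ((Complex.sinh ((B₀ : ℂ) * (t : ℂ)))⁻¹) ^ 2))) * hrel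
    + (K * ((B₀ : ℂ) ^ 2 / 4) * (-((((x1 : ℂ) - (y.1 : ℂ)) ^ 2 + ((x2 : ℂ) - (y.2 : ℂ)) ^ 2) *
      Complex.sinh ((B₀ : ℂ) * (t : ℂ)) * (Complex.sinh ((B₀ : ℂ) * (t : ℂ)))⁻¹) -
      ((((x1 : ℂ) - (y.1 : ℂ)) ^ 2 + ((x2 : ℂ) - (y.2 : ℂ)) ^ 2)))) * hsi
    + (K * ((B₀ : ℂ) ^ 2 / 4) * (2 * (x1 : ℂ) * (y.1 : ℂ) + 2 * (x2 : ℂ) * (y.2 : ℂ) -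
      (y.1 : ℂ) ^ 2 - (y.2 : ℂ) ^ 2)) * Complex.I_sq
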